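/- arXiv:1710.07130 — 4 statements merged into one kernel-verified Lean document; each statement's English description precedes it below -/
import Mathlib

section
/- Let X and Y be Banach spaces, let h : X → Y be a bounded linear map, and suppose there exists a bounded linear map s : X* → Y* between the dual spaces such that h* ∘ s ∘ h* = h* (where h* : Y* → X* is the adjoint of h). Then h has closed range, and the induced map X/ker(h) → range(h) is a Banach space isomorphism (bounded bijection with bounded inverse). -/
open NormedSpace

/-- From approximate controlled surjectivity and completeness of the domain, get exact
surjectivity (the gluing step of the open mapping theorem). -/
lemma aux_surj {X Z : Type*} [NormedAddCommGroup X] [NormedSpace ℝ X] [CompleteSpace X]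
    [NormedAddCommGroup Z] [NormedSpace ℝ Z]
    (T : X →L[ℝ] Z) (C : ℝ) (hC : 0 ≤ C)
    (approx : ∀ z : Z, ∀ ε : ℝ, 0 < ε → ∃ x : X, ‖x‖ ≤ C * ‖z‖ ∧ ‖z - T x‖ < ε) :
    Function.Surjective T := by
  intro z
  choose g hg1 hg2 using approx
  set a : ℝ := ‖z‖ + 1 with ha
  have hapos : 0 < a := by positivity
  have hεpos : ∀ n : ℕ, (0:ℝ) < a * (1/2)^(n+1) := by intro n; positivity
  let v : ℕ → Z := fun n => Nat.rec z (fun n vn => vn - T (g vn (a * (1/2)^(n+1)) (hεpos n))) n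
  let x : ℕ → X := fun n => g (v n) (a * (1/2)^(n+1)) (hεpos n)
  have hv_succ : ∀ n, v (n+1) = v n - T (x n) := fun n => rfl
  have hvb : ∀ n, ‖v n‖ ≤ a * (1/2)^n := by
    intro n
    cases n with
    | zero =>
        have : v 0 = z := rfl
        rw [this]; simp [ha]
    | succ n =>
        have h2 := (hg2 (v n) (a * (1/2)^(n+1)) (hεpos n)).le
        exact h2
  have hxb : ∀ n, ‖x n‖ ≤ C * a * (1/2)^n := by
    intro n
    calc ‖x n‖ ≤ C * ‖v n‖ := hg1 (v n) _ (hεpos n)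
      _ ≤ C * (a * (1/2)^n) := mul_le_mul_of_nonneg_left (hvb n) hC
      _ = C * a * (1/2)^n := by ring
  have hsum : Summable x := by
    apply Summable.of_norm
    exact Summable.of_nonneg_of_le (fun n => norm_nonneg _) hxb
      (summable_geometric_two.mul_left (C * a))
  obtain ⟨S, hS⟩ := hsum
  refine ⟨S, ?_⟩
  have h1 : Filter.Tendsto (fun N => T (∑ i ∈ Finset.range N, x i)) Filter.atTop
      (nhds (T S)) := (T.continuous.tendsto S).comp hS.tendsto_sum_nat
  have h2 : ∀ N, T (∑ i ∈ Finset.range N, x i) = z - v N := by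
    intro N
    rw [map_sum]
    have hterm : ∀ i, T (x i) = v i - v (i+1) := by
      intro i; rw [hv_succ i]; abel
    calc ∑ i ∈ Finset.range N, T (x i) = ∑ i ∈ Finset.range N, (v i - v (i+1)) :=
          Finset.sum_congr rfl (fun i _ => hterm i)
      _ = v 0 - v N := Finset.sum_range_sub' v N
      _ = z - v N := rfl
  have hv0 : Filter.Tendsto v Filter.atTop (nhds 0) := by
    apply squeeze_zero_norm hvb
    have := (tendsto_pow_atTop_nhds_zero_of_lt_one (by norm_num : (0:ℝ) ≤ 1/2)
      (by norm_num : (1/2:ℝ) < 1)).const_mul a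
    simpa using this
  have h3 : Filter.Tendsto (fun N => z - v N) Filter.atTop (nhds z) := by
    have := Filter.Tendsto.sub (tendsto_const_nhds (x := z) (f := Filter.atTop)) hv0
    simpa using this
  have h4 : Filter.Tendsto (fun N => T (∑ i ∈ Finset.range N, x i)) Filter.atTop (nhds z) := by
    simpa only [h2] using h3
  exact tendsto_nhds_unique h1 h4

/-- From the dual lower bound, get approximate controlled surjectivity via Hahn–Banach
separation. -/
lemma aux_approx {X Z : Type*} [NormedAddCommGroup X] [NormedSpace ℝ X]
    [NormedAddCommGroup Z] [NormedSpace ℝ Z]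
    (T : X →L[ℝ] Z) (C : ℝ) (hC : 0 < C)
    (key : ∀ ψ : Z →L[ℝ] ℝ, ‖ψ‖ ≤ C * ‖ψ.comp T‖) :
    ∀ z : Z, ∀ ε : ℝ, 0 < ε → ∃ x : X, ‖x‖ ≤ C * ‖z‖ ∧ ‖z - T x‖ < ε := by
  intro z ε hε
  rcases eq_or_ne z 0 with rfl | hz
  · exact ⟨0, by simp, by simpa using hε⟩
  by_contra hcon
  push_neg at hcon
  set r : ℝ := C * ‖z‖ with hr
  have hzpos : 0 < ‖z‖ := norm_pos_iff.mpr hz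
  have hrpos : 0 < r := mul_pos hC hzpos
  set D : Set Z := closure (T '' Metric.closedBall 0 r) with hD
  have hzD : z ∉ D := by
    intro hmem
    rcases Metric.mem_closure_iff.mp hmem ε hε with ⟨w, hw, hdist⟩
    rcases hw with ⟨x, hx, rfl⟩
    have hxn : ‖x‖ ≤ r := by simpa [Metric.mem_closedBall, dist_zero_right] using hx
    have := hcon x hxn
    rw [dist_eq_norm] at hdist
    linarith
  have hconv : Convex ℝ D := by
    apply Convex.closure
    have := (convex_closedBall (0:X) r).linear_image (T : X →ₗ[ℝ] Z)
    simpa using this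
  obtain ⟨ψ, u, hψD, hu⟩ := geometric_hahn_banach_closed_point hconv isClosed_closure hzD
  have h0D : (0:Z) ∈ D := subset_closure ⟨0, Metric.mem_closedBall_self hrpos.le, map_zero T⟩
  have hupos : 0 < u := by simpa using hψD 0 h0D
  have habs : ∀ x : X, ‖x‖ ≤ r → |ψ (T x)| ≤ u := by
    intro x hx
    rw [abs_le]
    constructor
    · have h1 := (hψD (T (-x)) (subset_closure ⟨-x, by simpa using hx, rfl⟩)).le
      have h2 : -(ψ (T x)) ≤ u := by simpa using h1
      linarith
    · exact (hψD (T x) (subset_closure ⟨x, by simpa [Metric.mem_closedBall, dist_zero_right]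
        using hx, rfl⟩)).le
  have hop : ‖ψ.comp T‖ ≤ u / r := by
    apply ContinuousLinearMap.opNorm_le_bound _ (div_nonneg hupos.le hrpos.le)
    intro x
    rcases eq_or_ne x 0 with rfl | hx0
    · simp [div_nonneg hupos.le hrpos.le]
    · have hxn : 0 < ‖x‖ := norm_pos_iff.mpr hx0
      have h1 : ‖(r / ‖x‖) • x‖ ≤ r := by
        rw [norm_smul, Real.norm_eq_abs, abs_of_pos (div_pos hrpos hxn)]
        rw [div_mul_cancel₀ _ hxn.ne']
      have h2 := habs _ h1
      have h3 : ψ (T ((r/‖x‖) • x)) = (r/‖x‖) * ψ (T x) := by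
        rw [map_smul, map_smul, smul_eq_mul]
      rw [h3, abs_mul, abs_of_pos (div_pos hrpos hxn)] at h2
      show ‖ψ (T x)‖ ≤ u / r * ‖x‖
      rw [Real.norm_eq_abs]
      calc |ψ (T x)| = (‖x‖/r) * ((r/‖x‖) * |ψ (T x)|) := by field_simp
        _ ≤ (‖x‖/r) * u := mul_le_mul_of_nonneg_left h2 (by positivity)
        _ = u / r * ‖x‖ := by ring
  have hψn : ‖ψ‖ ≤ C * (u / r) := (key ψ).trans (mul_le_mul_of_nonneg_left hop hC.le)
  have hfin : ψ z ≤ u := by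
    have h4 : ψ z ≤ ‖ψ‖ * ‖z‖ := by
      have := ψ.le_opNorm z
      rw [Real.norm_eq_abs] at this
      exact (le_abs_self _).trans this
    have h5 : ‖ψ‖ * ‖z‖ ≤ C * (u/r) * ‖z‖ := mul_le_mul_of_nonneg_right hψn (norm_nonneg z)
    have h6 : C * (u/r) * ‖z‖ = u := by
      rw [hr]
      field_simp
    linarith
  linarith

set_option maxHeartbeats 1000000 in
/-- If `h : X → Y` is a bounded linear map of Banach spaces and there is a bounded linear
map `s : X* → Y*` with `h* ∘ s ∘ h* = h*`, then `h` has closed range and the induced map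
`X/ker h → range h` is a Banach space isomorphism. -/
theorem stmt_0
    {X Y : Type*} [NormedAddCommGroup X] [NormedSpace ℝ X] [CompleteSpace X]
    [NormedAddCommGroup Y] [NormedSpace ℝ Y] [CompleteSpace Y]
    (h : X →L[ℝ] Y)
    (hstar : StrongDual ℝ Y →L[ℝ] StrongDual ℝ X)
    (hstar_def : ∀ (φ : StrongDual ℝ Y) (x : X), hstar φ x = φ (h x))
    (s : StrongDual ℝ X →L[ℝ] StrongDual ℝ Y)
    (hs : ∀ φ : StrongDual ℝ Y, hstar (s (hstar φ)) = hstar φ) :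
    IsClosed (LinearMap.range (h : X →ₗ[ℝ] Y) : Set Y) ∧
      ∃ e : (X ⧸ LinearMap.ker (h : X →ₗ[ℝ] Y)) ≃L[ℝ] LinearMap.range (h : X →ₗ[ℝ] Y),
        ∀ x : X, (e (Submodule.Quotient.mk x) : Y) = h x := by
  classical
  set Z := (LinearMap.range (h : X →ₗ[ℝ] Y)).topologicalClosure with hZdef
  have hZc : IsClosed (Z : Set Y) := (LinearMap.range (h : X →ₗ[ℝ] Y)).isClosed_topologicalClosure
  have hmem : ∀ x : X, h x ∈ Z := fun x =>
    (LinearMap.range (h : X →ₗ[ℝ] Y)).le_topologicalClosure ⟨x, rfl⟩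
  set T : X →L[ℝ] Z := h.codRestrict Z hmem with hT
  -- the key dual estimate
  have key : ∀ ψ : Z →L[ℝ] ℝ, ‖ψ‖ ≤ (‖s‖ + 1) * ‖ψ.comp T‖ := by
    intro ψ
    obtain ⟨ψt, hext, -⟩ := exists_extension_norm_eq (Z : Subspace ℝ Y) ψ
    set ψ' : StrongDual ℝ Y := s (hstar ψt) with hψ'
    have h1 : ∀ y ∈ (LinearMap.range (h : X →ₗ[ℝ] Y) : Set Y), ψ' y = ψt y := by
      intro y hy
      rw [SetLike.mem_coe, LinearMap.mem_range] at hy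
      obtain ⟨x, rfl⟩ := hy
      have h2 := congrFun (congrArg DFunLike.coe (hs ψt)) x
      rw [hstar_def, hstar_def] at h2
      exact h2
    have h3 : ∀ y ∈ (Z : Set Y), ψ' y = ψt y := by
      have hcl : (Z : Set Y) = closure (LinearMap.range (h : X →ₗ[ℝ] Y) : Set Y) := by
        rw [hZdef]; rfl
      rw [hcl]
      exact Set.EqOn.closure h1 ψ'.continuous ψt.continuous
    have h4 : ∀ z : Z, ψ z = ψ' z := fun z => by
      rw [← hext z]; exact (h3 z z.2).symm
    have h5 : hstar ψt = ψ.comp T := by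
      ext x
      rw [hstar_def]
      have hcoe : ψ (T x) = ψt (h x) := by
        rw [← hext (T x)]
        rfl
      rw [ContinuousLinearMap.comp_apply, hcoe]
    have h6 : ‖ψ‖ ≤ ‖ψ'‖ := by
      apply ContinuousLinearMap.opNorm_le_bound _ (norm_nonneg ψ')
      intro z
      rw [h4 z]
      calc ‖ψ' z‖ ≤ ‖ψ'‖ * ‖(z:Y)‖ := ψ'.le_opNorm z
        _ = ‖ψ'‖ * ‖z‖ := rfl
    have h7 : ‖ψ'‖ ≤ ‖s‖ * ‖hstar ψt‖ := s.le_opNorm _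
    rw [h5] at h7
    have h8 : ‖s‖ * ‖ψ.comp T‖ ≤ (‖s‖ + 1) * ‖ψ.comp T‖ := by
      nlinarith [norm_nonneg (ψ.comp T)]
    linarith
  have hCpos : (0:ℝ) < ‖s‖ + 1 := by positivity
  have approx := aux_approx T (‖s‖ + 1) hCpos key
  have hsurjT : Function.Surjective T := aux_surj T (‖s‖ + 1) hCpos.le approx
  have hrange : (LinearMap.range (h : X →ₗ[ℝ] Y) : Set Y) = (Z : Set Y) := by
    apply Set.Subset.antisymm
    · intro y hy
      exact (LinearMap.range (h : X →ₗ[ℝ] Y)).le_topologicalClosure hy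
    · intro y hy
      obtain ⟨x, hx⟩ := hsurjT ⟨y, hy⟩
      have : h x = y := congrArg Subtype.val hx
      exact ⟨x, this⟩
  have hclosed : IsClosed (LinearMap.range (h : X →ₗ[ℝ] Y) : Set Y) := hrange ▸ hZc
  refine ⟨hclosed, ?_⟩
  haveI : CompleteSpace (LinearMap.range (h : X →ₗ[ℝ] Y)) := hclosed.completeSpace_coe
  haveI : IsClosed ((LinearMap.ker (h : X →ₗ[ℝ] Y) : Submodule ℝ X) : Set X) := ContinuousLinearMap.isClosed_ker h
  set T2 : X →L[ℝ] (LinearMap.range (h : X →ₗ[ℝ] Y)) :=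
    h.codRestrict (LinearMap.range (h : X →ₗ[ℝ] Y)) (fun x => LinearMap.mem_range_self _ x) with hT2
  have hle : LinearMap.ker (h : X →ₗ[ℝ] Y) ≤ LinearMap.ker (T2 : X →ₗ[ℝ] LinearMap.range (h : X →ₗ[ℝ] Y)) := by
    intro x hx
    rw [LinearMap.mem_ker] at hx ⊢
    apply Subtype.ext
    show h x = (0:Y)
    simpa using hx
  set flin : (X ⧸ LinearMap.ker (h : X →ₗ[ℝ] Y)) →ₗ[ℝ] (LinearMap.range (h : X →ₗ[ℝ] Y)) :=
    (LinearMap.ker (h : X →ₗ[ℝ] Y)).liftQ (T2 : X →ₗ[ℝ] LinearMap.range (h : X →ₗ[ℝ] Y)) hle with hflin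
  have hcomp : ∀ x : X, flin (Submodule.Quotient.mk x) = T2 x := fun x =>
    Submodule.liftQ_apply _ _ x
  have fcont : Continuous flin := by
    rw [← (Submodule.isOpenQuotientMap_mkQ (LinearMap.ker (h : X →ₗ[ℝ] Y))).continuous_comp_iff]
    have heq : ⇑flin ∘ ⇑(LinearMap.ker (h : X →ₗ[ℝ] Y)).mkQ = ⇑T2 := funext fun x => hcomp x
    rw [heq]
    exact T2.continuous
  set f : (X ⧸ LinearMap.ker (h : X →ₗ[ℝ] Y)) →L[ℝ] (LinearMap.range (h : X →ₗ[ℝ] Y)) := ⟨flin, fcont⟩ with hf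
  have hcomp' : ∀ x : X, f (Submodule.Quotient.mk x) = T2 x := hcomp
  have hker : LinearMap.ker (f : (X ⧸ LinearMap.ker (h : X →ₗ[ℝ] Y)) →ₗ[ℝ] LinearMap.range (h : X →ₗ[ℝ] Y)) = ⊥ := by
    rw [LinearMap.ker_eq_bot']
    intro m hm
    obtain ⟨x, rfl⟩ := Submodule.Quotient.mk_surjective _ m
    rw [ContinuousLinearMap.coe_coe, hcomp' x] at hm
    have hx0 : h x = 0 := congrArg Subtype.val hm
    exact (Submodule.Quotient.mk_eq_zero _).mpr (LinearMap.mem_ker.mpr hx0)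
  have hrange2 : LinearMap.range (f : (X ⧸ LinearMap.ker (h : X →ₗ[ℝ] Y)) →ₗ[ℝ] LinearMap.range (h : X →ₗ[ℝ] Y)) = ⊤ := by
    rw [LinearMap.range_eq_top]
    rintro ⟨y, hy⟩
    obtain ⟨x, hx⟩ := hy
    exact ⟨Submodule.Quotient.mk x, Subtype.ext hx⟩
  let e : (X ⧸ LinearMap.ker (h : X →ₗ[ℝ] Y)) ≃L[ℝ] LinearMap.range (h : X →ₗ[ℝ] Y) :=
    ContinuousLinearEquiv.ofBijective f hker hrange2
  refine ⟨e, fun x => ?_⟩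
  have he : e (Submodule.Quotient.mk x) = f (Submodule.Quotient.mk x) := by
    show (ContinuousLinearEquiv.ofBijective f hker hrange2) (Submodule.Quotient.mk x)
      = f (Submodule.Quotient.mk x)
    rw [ContinuousLinearEquiv.coeFn_ofBijective]
  rw [he, hcomp' x]
  rfl
end

section
/- Let (L, R) be an adjoint pair of bimodules over rings A and B with unit η and counit ε. Define a multiplication on K = L ⊗_B R by (l₁ ⊗ r₁)·(l₂ ⊗ r₂) = l₁ · ε(r₁ ⊗ l₂) ⊗ r₂. Then this multiplication is associative, and the map η : A → K is a ring homomorphism (with respect to this multiplication). -/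
open TensorProduct

/-- For an adjoint pair of bimodules (here over a commutative ring) with unit `η` and
counit `ε`, the multiplication on `K = L ⊗ R` defined by
`(l₁ ⊗ r₁)·(l₂ ⊗ r₂) = ε(r₁ ⊗ l₂) • (l₁ ⊗ r₂)` is associative, and `η` is a ring
homomorphism onto it (it is multiplicative, and sends `1` to a two-sided unit). -/
theorem stmt_5 {k L R : Type*} [CommRing k]
    [AddCommGroup L] [Module k L] [AddCommGroup R] [Module k R]
    (η : k →ₗ[k] L ⊗[k] R)
    (ε : R ⊗[k] L →ₗ[k] k)
    (tri₁ : ∀ r : R,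
      (TensorProduct.lid k R)
        ((LinearMap.rTensor R ε)
          ((TensorProduct.assoc k R L R).symm
            ((LinearMap.lTensor R η) ((TensorProduct.rid k R).symm r)))) = r)
    (tri₂ : ∀ l : L,
      (TensorProduct.rid k L)
        ((LinearMap.lTensor L ε)
          ((TensorProduct.assoc k L R L)
            ((LinearMap.rTensor L η) ((TensorProduct.lid k L).symm l)))) = l)
    (μ : L ⊗[k] R →ₗ[k] L ⊗[k] R →ₗ[k] L ⊗[k] R)
    (hμ : ∀ (l₁ l₂ : L) (r₁ r₂ : R),
      μ (l₁ ⊗ₜ[k] r₁) (l₂ ⊗ₜ[k] r₂) = ε (r₁ ⊗ₜ[k] l₂) • (l₁ ⊗ₜ[k] r₂)) :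
    (∀ x y z : L ⊗[k] R, μ (μ x y) z = μ x (μ y z)) ∧
    (∀ a b : k, μ (η a) (η b) = η (a * b)) ∧
    (∀ x : L ⊗[k] R, μ (η 1) x = x ∧ μ x (η 1) = x) := by
  -- left unit on pure tensors
  have key_left : ∀ (l : L) (r : R), μ (η 1) (l ⊗ₜ[k] r) = l ⊗ₜ[k] r := by
    intro l r
    have hS : ∀ t : L ⊗[k] R, μ t (l ⊗ₜ[k] r) =
        ((TensorProduct.rid k L) ((LinearMap.lTensor L ε)
          ((TensorProduct.assoc k L R L) (t ⊗ₜ[k] l)))) ⊗ₜ[k] r := by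
      intro t
      induction t using TensorProduct.induction_on with
      | zero => simp
      | tmul l' r' => simp [hμ, TensorProduct.smul_tmul']
      | add a b ha hb =>
        simp [map_add, LinearMap.add_apply, TensorProduct.add_tmul, ha, hb]
    rw [hS]
    have h := tri₂ l
    simp only [TensorProduct.lid_symm_apply, LinearMap.rTensor_tmul] at h
    rw [h]
  -- right unit on pure tensors
  have key_right : ∀ (l : L) (r : R), μ (l ⊗ₜ[k] r) (η 1) = l ⊗ₜ[k] r := by
    intro l r
    have hS : ∀ t : L ⊗[k] R, μ (l ⊗ₜ[k] r) t =
        l ⊗ₜ[k] ((TensorProduct.lid k R) ((LinearMap.rTensor R ε)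
          ((TensorProduct.assoc k R L R).symm (r ⊗ₜ[k] t)))) := by
      intro t
      induction t using TensorProduct.induction_on with
      | zero => simp
      | tmul l' r' => simp [hμ, TensorProduct.tmul_smul]
      | add a b ha hb =>
        simp [map_add, TensorProduct.tmul_add, ha, hb]
    rw [hS]
    have h := tri₁ r
    simp only [TensorProduct.rid_symm_apply, LinearMap.lTensor_tmul] at h
    rw [h]
  have unit : ∀ x : L ⊗[k] R, μ (η 1) x = x ∧ μ x (η 1) = x := by
    intro x
    induction x using TensorProduct.induction_on with
    | zero => simp
    | tmul l r => exact ⟨key_left l r, key_right l r⟩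
    | add a b ha hb =>
      constructor
      · rw [map_add, ha.1, hb.1]
      · rw [map_add, LinearMap.add_apply, ha.2, hb.2]
  refine ⟨?_, ?_, unit⟩
  · intro x y z
    induction x using TensorProduct.induction_on with
    | zero => simp
    | add x₁ x₂ h₁ h₂ => simp [map_add, LinearMap.add_apply, h₁, h₂]
    | tmul l₁ r₁ =>
      induction y using TensorProduct.induction_on with
      | zero => simp
      | add y₁ y₂ h₁ h₂ => simp [map_add, LinearMap.add_apply, h₁, h₂]
      | tmul l₂ r₂ =>
        induction z using TensorProduct.induction_on with
        | zero => simp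
        | add z₁ z₂ h₁ h₂ => simp [map_add, h₁, h₂]
        | tmul l₃ r₃ =>
          simp [hμ, map_smul, LinearMap.smul_apply, smul_smul, mul_comm]
  · intro a b
    have ha : η a = a • η 1 := by rw [← map_smul, smul_eq_mul, mul_one]
    have hb : η b = b • η 1 := by rw [← map_smul, smul_eq_mul, mul_one]
    rw [ha, hb, map_smul, map_smul, LinearMap.smul_apply, (unit (η 1)).1,
      smul_smul, ← map_smul, smul_eq_mul, mul_one, mul_comm]
end

section
/- Let A → B be a faithfully flat ring homomorphism of commutative rings (or a ring map with B faithfully flat as a left A-module). Then for every right A-module X, the sequence 0 → X → X ⊗_A B ⇉ X ⊗_A B ⊗_A B is exact, where the first map is x ↦ x ⊗ 1 and the two parallel maps are x ⊗ b ↦ x ⊗ 1 ⊗ b and x ⊗ b ↦ x ⊗ b ⊗ 1. In particular x ↦ x ⊗ 1 is injective with image equal to the equalizer of the two maps. -/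
open TensorProduct

section Aux

variable {A B X : Type*} [CommRing A] [CommRing B] [Algebra A B]
    [AddCommGroup X] [Module A X]

/-- Multiply the last two tensor factors. -/
noncomputable def stmt13Aux (X : Type*) [AddCommGroup X] [Module A X] :
    (X ⊗[A] B) ⊗[A] B →ₗ[A] X ⊗[A] B :=
  (LinearMap.lTensor X (LinearMap.mul' A B)) ∘ₗ (TensorProduct.assoc A X B B).toLinearMap

@[simp] lemma stmt13Aux_tmul (x : X) (b c : B) :
    stmt13Aux X ((x ⊗ₜ[A] b) ⊗ₜ[A] c) = x ⊗ₜ[A] (b * c) := rfl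

lemma stmt13_retraction :
    stmt13Aux X ∘ₗ LinearMap.rTensor B ((TensorProduct.mk A X B).flip 1) =
      LinearMap.id := by
  ext x b
  simp

lemma stmt13_homotopy :
    LinearMap.rTensor B ((TensorProduct.mk A X B).flip 1) ∘ₗ stmt13Aux X -
      stmt13Aux (X ⊗[A] B) ∘ₗ
        LinearMap.rTensor B
          (LinearMap.rTensor B ((TensorProduct.mk A X B).flip 1) -
            (TensorProduct.mk A (X ⊗[A] B) B).flip 1) =
      LinearMap.id := by
  ext x b c
  simp only [LinearMap.compr₂_apply, mk_apply, LinearMap.sub_apply, LinearMap.comp_apply,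
    AlgebraTensorModule.curry_apply, curry_apply, LinearMap.coe_restrictScalars,
    LinearMap.rTensor_tmul, LinearMap.flip_apply, mk_apply, stmt13Aux_tmul, map_sub,
    LinearMap.id_apply]
  rw [sub_tmul, map_sub, stmt13Aux_tmul, stmt13Aux_tmul, one_mul, sub_sub_cancel]

end Aux

/-- Faithfully flat descent in low degrees: if `B` is a faithfully flat `A`-algebra and
`X` an `A`-module, then `x ↦ x ⊗ 1` is injective, and its range is the equalizer of the
two maps `x ⊗ b ↦ x ⊗ 1 ⊗ b` and `x ⊗ b ↦ x ⊗ b ⊗ 1`, i.e. the kernel of their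
difference. -/
theorem stmt_13 {A B X : Type*} [CommRing A] [CommRing B] [Algebra A B]
    [Module.FaithfullyFlat A B]
    [AddCommGroup X] [Module A X] :
    Function.Injective ((TensorProduct.mk A X B).flip 1) ∧
    LinearMap.range ((TensorProduct.mk A X B).flip 1) =
      LinearMap.ker
        (LinearMap.rTensor B ((TensorProduct.mk A X B).flip 1) -
          (TensorProduct.mk A (X ⊗[A] B) B).flip 1) := by
  set i := (TensorProduct.mk A X B).flip 1 with hi
  set d := LinearMap.rTensor B i - (TensorProduct.mk A (X ⊗[A] B) B).flip 1 with hd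
  have hinj : Function.Injective (LinearMap.rTensor B i) := by
    intro u v huv
    have h1 := LinearMap.congr_fun (stmt13_retraction (A := A) (B := B) (X := X)) u
    have h2 := LinearMap.congr_fun (stmt13_retraction (A := A) (B := B) (X := X)) v
    simp only [LinearMap.comp_apply, LinearMap.id_apply] at h1 h2
    rw [← h1, ← h2, huv]
  have hexact : Function.Exact (LinearMap.rTensor B i) (LinearMap.rTensor B d) := by
    rw [LinearMap.exact_iff]
    apply le_antisymm
    · intro ξ hξ
      have hk := LinearMap.congr_fun
        (stmt13_homotopy (A := A) (B := B) (X := X)) ξ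
      simp only [LinearMap.sub_apply, LinearMap.comp_apply, LinearMap.id_apply, ← hd] at hk
      rw [LinearMap.mem_ker.mp hξ, map_zero, sub_zero] at hk
      exact ⟨stmt13Aux X ξ, hk⟩
    · rintro _ ⟨u, rfl⟩
      have : d ∘ₗ i = 0 := by
        ext x
        simp [hd, hi]
      rw [LinearMap.mem_ker, ← LinearMap.comp_apply, ← LinearMap.rTensor_comp, this]
      simp
  have hex1 : Function.Exact (0 : X →ₗ[A] X) i := by
    apply Module.FaithfullyFlat.rTensor_reflects_exact A B
    rw [LinearMap.exact_iff]
    rw [LinearMap.ker_eq_bot.mpr hinj]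
    simp [LinearMap.rTensor_zero]
  have hex2 : Function.Exact i d :=
    Module.FaithfullyFlat.rTensor_reflects_exact A B i d hexact
  constructor
  · rw [← LinearMap.ker_eq_bot, LinearMap.exact_iff.mp hex1]
    simp
  · exact (LinearMap.exact_iff.mp hex2).symm
end

section
/- Let A and B be C*-algebras, F a right Hilbert C*-module over B on which A acts via a *-homomorphism into the adjointable operators, and let X be a right Hilbert C*-module over A. Then the formula ⟨x₁ ⊗ f₁ | x₂ ⊗ f₂⟩ = ⟨f₁ | ⟨x₁|x₂⟩·f₂⟩ defines a B-valued inner product on the algebraic tensor product X ⊗_A F which is positive semidefinite and satisfies ⟨ξ | ζ·b⟩ = ⟨ξ|ζ⟩·b and ⟨ξ|ζ⟩* = ⟨ζ|ξ⟩. -/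
open scoped RightActions

/-- The Hilbert C*-module class as it stood in Mathlib of December 2024 (right `Aᵐᵒᵖ`-action,
inner product `A`-linear on the right: `⟪x, y <• a⟫ = ⟪x, y⟫ * a`). Mathlib's `CStarModule`
now uses a left action, so the old notion is restated here. -/
class RightCStarModule (A E : Type*) [NonUnitalSemiring A] [StarRing A] [Module ℂ A]
    [AddCommGroup E] [Module ℂ E] [PartialOrder A] [SMul Aᵐᵒᵖ E] [Norm A] [Norm E]
    extends Inner A E where
  inner_add_right {x} {y} {z} : inner x (y + z) = inner x y + inner x z
  inner_self_nonneg {x} : 0 ≤ inner x x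
  inner_self {x} : inner x x = 0 ↔ x = 0
  inner_op_smul_right {a : A} {x y : E} : inner x (y <• a) = inner x y * a
  inner_smul_right_complex {z : ℂ} {x} {y} : inner x (z • y) = z • inner x y
  star_inner x y : star (inner x y) = inner y x
  norm_eq_sqrt_norm_inner_self x : ‖x‖ = Real.sqrt ‖inner x x‖


namespace RightCStarModule

section general

variable {A E : Type*} [NonUnitalCStarAlgebra A] [PartialOrder A] [AddCommGroup E] [Module ℂ E]
    [SMul Aᵐᵒᵖ E] [Norm E] [RightCStarModule A E]

lemma inner_add_left {x y z : E} : inner A (x + y) z = inner A x z + inner A y z := by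
  rw [← RightCStarModule.star_inner z (x + y), RightCStarModule.inner_add_right, star_add,
    RightCStarModule.star_inner, RightCStarModule.star_inner]

lemma inner_sub_right {x y z : E} : inner A x (y - z) = inner A x y - inner A x z := by
  have h := (RightCStarModule.inner_add_right (A := A) (x := x) (y := y - z) (z := z)).symm
  rw [sub_add_cancel] at h
  rw [← h, add_sub_cancel_right]

lemma inner_sub_left {x y z : E} : inner A (x - y) z = inner A x z - inner A y z := by
  rw [← RightCStarModule.star_inner z (x - y), RightCStarModule.inner_sub_right, star_sub,
    RightCStarModule.star_inner, RightCStarModule.star_inner]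

lemma inner_zero_right {x : E} : inner A x 0 = 0 := by
  have h := RightCStarModule.inner_sub_right (A := A) (x := x) (y := 0) (z := 0)
  rw [sub_self, sub_self] at h
  exact h

lemma inner_zero_left {x : E} : inner A 0 x = 0 := by
  rw [← RightCStarModule.star_inner x 0, RightCStarModule.inner_zero_right, star_zero]

lemma inner_op_smul_left {a : A} {x y : E} : inner A (x <• a) y = star a * inner A x y := by
  rw [← RightCStarModule.star_inner y (x <• a), RightCStarModule.inner_op_smul_right, star_mul,
    RightCStarModule.star_inner]

lemma inner_smul_right_real {r : ℝ} {x y : E} : inner A x (r • y) = r • inner A x y := by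
  rw [← Complex.coe_smul r y, RightCStarModule.inner_smul_right_complex, Complex.coe_smul]

lemma inner_smul_left_real {r : ℝ} {x y : E} : inner A (r • x) y = r • inner A x y := by
  rw [← Complex.coe_smul r x, ← RightCStarModule.star_inner y ((r : ℂ) • x),
    RightCStarModule.inner_smul_right_complex, star_smul, RightCStarModule.star_inner]
  simp

include A in
protected lemma norm_nonneg {x : E} : 0 ≤ ‖x‖ := by
  rw [RightCStarModule.norm_eq_sqrt_norm_inner_self (A := A) x]
  exact Real.sqrt_nonneg _

include A in
lemma norm_pos' {x : E} (hx : x ≠ 0) : 0 < ‖x‖ := by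
  rw [RightCStarModule.norm_eq_sqrt_norm_inner_self (A := A) x, Real.sqrt_pos, norm_pos_iff]
  intro H
  exact hx (RightCStarModule.inner_self.mp H)

variable [StarOrderedRing A]

lemma inner_mul_inner_swap_le {x y : E} :
    inner A y x * inner A x y ≤ ‖x‖ ^ 2 • inner A y y := by
  rcases eq_or_ne x 0 with h | h
  · rw [h, RightCStarModule.inner_zero_right, RightCStarModule.inner_zero_left, zero_mul,
      RightCStarModule.norm_eq_sqrt_norm_inner_self (A := A) (0 : E),
      RightCStarModule.inner_zero_left]
    simp
  · have h₁ : ∀ (a : A),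
        (0 : A) ≤ ‖x‖ ^ 2 • (star a * a) - ‖x‖ ^ 2 • (star a * inner A x y)
                  - ‖x‖ ^ 2 • (inner A y x * a) + ‖x‖ ^ 2 • (‖x‖ ^ 2 • inner A y y) := fun a => by
      calc (0 : A) ≤ inner A (x <• a - ‖x‖ ^ 2 • y) (x <• a - ‖x‖ ^ 2 • y) := by
                      exact RightCStarModule.inner_self_nonneg
            _ = star a * inner A x x * a - ‖x‖ ^ 2 • (star a * inner A x y)
                  - ‖x‖ ^ 2 • (inner A y x * a) + ‖x‖ ^ 2 • (‖x‖ ^ 2 • inner A y y) := by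
                      simp only [RightCStarModule.inner_sub_right,
                        RightCStarModule.inner_op_smul_right, RightCStarModule.inner_sub_left,
                        RightCStarModule.inner_op_smul_left, RightCStarModule.inner_smul_left_real,
                        RightCStarModule.inner_smul_right_real, mul_sub, sub_mul, mul_smul_comm, smul_mul_assoc,
                        smul_sub, mul_assoc]
                      abel
            _ ≤ ‖x‖ ^ 2 • (star a * a) - ‖x‖ ^ 2 • (star a * inner A x y)
                  - ‖x‖ ^ 2 • (inner A y x * a) + ‖x‖ ^ 2 • (‖x‖ ^ 2 • inner A y y) := by
                      gcongr
                      calc _ ≤ ‖inner A x x‖ • (star a * a) :=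
                          CStarAlgebra.star_left_conjugate_le_norm_smul
                            (hb := RightCStarModule.star_inner x x)
                        _ = ‖x‖ ^ 2 • (star a * a) := by
                          rw [RightCStarModule.norm_eq_sqrt_norm_inner_self (A := A) x,
                            Real.sq_sqrt (norm_nonneg _)]
    specialize h₁ (inner A x y)
    simp only [RightCStarModule.star_inner, sub_self, zero_sub, le_neg_add_iff_add_le,
      add_zero] at h₁
    rwa [smul_le_smul_iff_of_pos_left (pow_pos (RightCStarModule.norm_pos' (A := A) h) _)] at h₁

variable (E) in
lemma norm_inner_le {x y : E} : ‖inner A x y‖ ≤ ‖x‖ * ‖y‖ := by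
  have := calc ‖inner A x y‖ ^ 2 = ‖inner A y x * inner A x y‖ := by
                rw [← RightCStarModule.star_inner x y, CStarRing.norm_star_mul_self, pow_two]
    _ ≤ ‖‖x‖ ^ 2 • inner A y y‖ := by
                refine CStarAlgebra.norm_le_norm_of_nonneg_of_le ?_
                  RightCStarModule.inner_mul_inner_swap_le
                rw [← RightCStarModule.star_inner x y]
                exact star_mul_self_nonneg _
    _ = ‖x‖ ^ 2 * ‖inner A y y‖ := by simp [norm_smul]
    _ = ‖x‖ ^ 2 * ‖y‖ ^ 2 := by
                rw [RightCStarModule.norm_eq_sqrt_norm_inner_self (A := A) y,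
                  Real.sq_sqrt (norm_nonneg _)]
    _ = (‖x‖ * ‖y‖) ^ 2 := by rw [mul_pow]
  refine (pow_le_pow_iff_left₀ (norm_nonneg (inner A x y)) ?_ (by simp)).mp this
  exact mul_nonneg (RightCStarModule.norm_nonneg (A := A)) (RightCStarModule.norm_nonneg (A := A))

end general

end RightCStarModule


section ITPAux

open scoped NNReal
open RightCStarModule
set_option linter.unusedSectionVars false
set_option maxHeartbeats 1000000


section RhoAux

variable {A B F : Type*}
    [NonUnitalCStarAlgebra A] [PartialOrder A] [StarOrderedRing A]
    [NonUnitalCStarAlgebra B] [PartialOrder B] [StarOrderedRing B]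
    [AddCommGroup F] [Module ℂ F] [SMul Bᵐᵒᵖ F] [Norm F] [RightCStarModule B F]
    (ρ : A → F →ₗ[ℂ] F)
    (hadd : ∀ a a' : A, ρ (a + a') = ρ a + ρ a')
    (hsmul : ∀ (c : ℂ) (a : A), ρ (c • a) = c • ρ a)
    (hmul : ∀ a a' : A, ρ (a * a') = (ρ a).comp (ρ a'))
    (hstar : ∀ (a : A) (f₁ f₂ : F),
      (inner B (ρ a f₁) f₂ : B) = inner B f₁ (ρ (star a) f₂))

include hmul hstar in
lemma itp_inner_rho_mul (s t : A) (u v : F) :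
    (inner B u (ρ (star s * t) v) : B) = inner B (ρ s u) (ρ t v) := by
  rw [hmul]
  exact (hstar s u ((ρ t) v)).symm

include hadd hsmul hmul hstar in
lemma itp_inner_rho_nonneg (z : A) (hz : 0 ≤ z) (f : F) : 0 ≤ (inner B f (ρ z f) : B) := by
  rw [StarOrderedRing.nonneg_iff] at hz
  induction hz using AddSubmonoid.closure_induction with
  | mem s hs =>
    obtain ⟨s, rfl⟩ := hs
    rw [itp_inner_rho_mul ρ hmul hstar]
    exact inner_self_nonneg
  | zero =>
    have h0 : ρ 0 = 0 := by simpa using hsmul 0 0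
    simp [h0, RightCStarModule.inner_zero_right]
  | add p q _ _ hp hq =>
    rw [hadd]
    simpa [RightCStarModule.inner_add_right] using add_nonneg hp hq

include hadd hsmul hmul hstar in
lemma itp_inner_rho_mono {z z' : A} (h : z ≤ z') (f : F) :
    (inner B f (ρ z f) : B) ≤ inner B f (ρ z' f) := by
  have h1 : 0 ≤ (inner B f (ρ (z' - z) f) : B) :=
    itp_inner_rho_nonneg ρ hadd hsmul hmul hstar _ (sub_nonneg.mpr h) f
  have h2 : ρ (z' - z) = ρ z' - ρ z := by
    have hneg : ρ (-z) = -ρ z := by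
      have := hsmul (-1) z
      simpa using this
    rw [sub_eq_add_neg, hadd, hneg, ← sub_eq_add_neg]
  rw [h2] at h1
  simpa [RightCStarModule.inner_sub_right, sub_nonneg] using h1

lemma itp_inner_sum_left {ι : Type*} (s : Finset ι) (u : ι → F) (v : F) :
    (inner B (∑ i ∈ s, u i) v : B) = ∑ i ∈ s, (inner B (u i) v : B) := by
  classical
  induction s using Finset.cons_induction with
  | empty => simp [RightCStarModule.inner_zero_left]
  | cons i s his ih => simp [Finset.sum_cons, Finset.sum_insert his, RightCStarModule.inner_add_left, ih]

lemma itp_inner_sum_right {ι : Type*} (s : Finset ι) (u : ι → F) (v : F) :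
    (inner B v (∑ i ∈ s, u i) : B) = ∑ i ∈ s, (inner B v (u i) : B) := by
  classical
  induction s using Finset.cons_induction with
  | empty => simp [RightCStarModule.inner_zero_right]
  | cons i s his ih => simp [Finset.sum_cons, Finset.sum_insert his, RightCStarModule.inner_add_right, ih]

end RhoAux


lemma itp_nnreal_pt (ε : ℝ≥0) (hε : 0 < ε) (u : ℝ≥0) :
    (ε * (u+ε)⁻¹) * u * (ε * (u+ε)⁻¹) ≤ NNReal.sqrt ε * NNReal.sqrt u := by
  have hden : (0:ℝ) < (u:ℝ) + ε := by positivity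
  rw [← NNReal.coe_le_coe]
  push_cast
  set su := Real.sqrt u with hsu
  set st := Real.sqrt ε with hst
  have h1 : su^2 = (u:ℝ) := Real.sq_sqrt u.coe_nonneg
  have h2 : st^2 = (ε:ℝ) := Real.sq_sqrt ε.coe_nonneg
  have h3 : 0 ≤ su := Real.sqrt_nonneg _
  have h4 : 0 ≤ st := Real.sqrt_nonneg _
  have key : (ε:ℝ)*ε*u ≤ st*su*((u:ℝ)+ε)^2 := by
    rw [← h1, ← h2]
    nlinarith [sq_nonneg (su*st - st^2), sq_nonneg (su - st), sq_nonneg (su*su - st*st),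
      mul_nonneg h3 h4, sq_nonneg (su*su*st - st*st*st), mul_nonneg (mul_nonneg h3 h4) h4,
      mul_nonneg (mul_nonneg h3 h3) h4, sq_nonneg (su*su - su*st), sq_nonneg (su*st - st*st)]
  calc (ε:ℝ) * ((u:ℝ)+ε)⁻¹ * u * (ε * ((u:ℝ)+ε)⁻¹)
      = (ε:ℝ)*ε*u * (((u:ℝ)+ε)^2)⁻¹ := by field_simp
    _ ≤ st*su*((u:ℝ)+ε)^2 * (((u:ℝ)+ε)^2)⁻¹ := by gcongr
    _ = st*su := by field_simp

section Eps

variable {A B X F : Type*}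
    [NonUnitalCStarAlgebra A] [PartialOrder A] [StarOrderedRing A]
    [NonUnitalCStarAlgebra B] [PartialOrder B] [StarOrderedRing B]
    [AddCommGroup X] [Module ℂ X] [SMul Aᵐᵒᵖ X] [Norm X] [RightCStarModule A X]
    [AddCommGroup F] [Module ℂ F] [SMul Bᵐᵒᵖ F] [Norm F] [RightCStarModule B F]
    (ρ : A → F →ₗ[ℂ] F)
    (hadd : ∀ a a' : A, ρ (a + a') = ρ a + ρ a')
    (hsmul : ∀ (c : ℂ) (a : A), ρ (c • a) = c • ρ a)
    (hmul : ∀ a a' : A, ρ (a * a') = (ρ a).comp (ρ a'))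
    (hstar : ∀ (a : A) (f₁ f₂ : F),
      (inner B (ρ a f₁) f₂ : B) = inner B f₁ (ρ (star a) f₂))

include hadd hsmul hmul hstar in
lemma itp_eps_estimate {n : ℕ} (x₀ : X) (xs : Fin n → X) (f₀ : F) (fs : Fin n → F)
    (ih : ∀ (y : Fin n → X) (g : Fin n → F),
      0 ≤ ∑ i, ∑ j, (inner B (g i) (ρ ((inner A (y i) (y j) : A)) (g j)) : B))
    (ε : ℝ≥0) (hε : 0 < ε) :
    ∃ P E : B, 0 ≤ P ∧
      ((inner B f₀ (ρ ((inner A x₀ x₀ : A)) f₀) : B)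
        + (∑ j, (inner B f₀ (ρ ((inner A x₀ (xs j) : A)) (fs j)) : B))
        + (∑ i, (inner B (fs i) (ρ (star (inner A x₀ (xs i) : A)) f₀) : B))
        + ∑ i, ∑ j, (inner B (fs i) (ρ ((inner A (xs i) (xs j) : A)) (fs j)) : B)) = P + E ∧
      ‖E‖ ≤ Real.sqrt (Real.sqrt ε) *
        (∑ j, 2 * ‖fs j‖ * Real.sqrt (‖xs j‖^2 *
          ‖(inner B f₀ (ρ (cfcₙ NNReal.sqrt (inner A x₀ x₀ : A)) f₀) : B)‖)) := by
  classical
  set a : A := inner A x₀ x₀ with ha_def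
  have ha : 0 ≤ a := inner_self_nonneg
  have haU : (0 : Unitization ℂ A) ≤ (a : Unitization ℂ A) := Unitization.inr_nonneg_iff.mpr ha
  set b : Fin n → A := fun i => inner A x₀ (xs i) with hb_def
  have hbfold : ∀ j, (inner A x₀ (xs j) : A) = b j := fun j => rfl
  simp only [hbfold]
  -- Cauchy–Schwarz, with ℝ≥0 constants
  set Kc : Fin n → ℝ≥0 := fun j => Real.toNNReal (‖xs j‖^2) with hKc_def
  have hKc : ∀ j, ((Kc j : ℝ≥0) : ℝ) = ‖xs j‖^2 := fun j =>
    Real.coe_toNNReal _ (by positivity)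
  have hCS : ∀ j, b j * star (b j) ≤ ((Kc j : ℝ≥0) : ℝ) • a := by
    intro j
    have h := inner_mul_inner_swap_le (E := X) (A := A) (x := xs j) (y := x₀)
    rw [star_inner, hKc]
    simpa using h
  -- scalar functions
  have h2ε : ∀ u : ℝ≥0, u + 2*ε ≠ 0 := fun u => by positivity
  have hεu : ∀ u : ℝ≥0, u + ε ≠ 0 := fun u => by positivity
  have hsqne : ∀ u : ℝ≥0, NNReal.sqrt (u + 2*ε) ≠ 0 := fun u => by
    simpa [NNReal.sqrt_eq_zero] using (h2ε u)
  set φ : ℝ≥0 → ℝ≥0 := fun u => u * (NNReal.sqrt (u + 2*ε))⁻¹ with hφ_def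
  set ψ : ℝ≥0 → ℝ≥0 := fun u => NNReal.sqrt (u + 2*ε) * (u + ε)⁻¹ with hψ_def
  set γ : ℝ≥0 → ℝ≥0 := fun u => ε * (u + ε)⁻¹ with hγ_def
  set dlt : ℝ≥0 → ℝ≥0 := fun u => 2*ε*u * (u + 2*ε)⁻¹ with hdlt_def
  set lam : ℝ≥0 → ℝ≥0 := fun u => (u + ε)⁻¹ with hlam_def
  have hsqc : Continuous (fun u : ℝ≥0 => NNReal.sqrt (u + 2*ε)) :=
    NNReal.continuous_sqrt.comp (continuous_id.add continuous_const)
  have hφc : Continuous φ := continuous_id.mul (hsqc.inv₀ hsqne)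
  have hiεc : Continuous (fun u : ℝ≥0 => (u + ε)⁻¹) :=
    (continuous_id.add continuous_const).inv₀ hεu
  have hψc : Continuous ψ := hsqc.mul hiεc
  have hγc : Continuous γ := continuous_const.mul hiεc
  have hdltc : Continuous dlt :=
    ((continuous_const.mul continuous_id)).mul
      ((continuous_id.add continuous_const).inv₀ h2ε)
  have hlamc : Continuous lam := hiεc
  -- Unitization elements
  set aU : Unitization ℂ A := (a : Unitization ℂ A) with haU_def
  set Φ : Unitization ℂ A := cfc φ aU with hΦ_def
  set Ψ : Unitization ℂ A := cfc ψ aU with hΨ_def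
  set Γ : Unitization ℂ A := cfc γ aU with hΓ_def
  set L : Unitization ℂ A := cfc lam aU with hL_def
  have hΦsa : IsSelfAdjoint Φ := (cfc_nonneg (fun x _ => zero_le)).isSelfAdjoint
  have hΨsa : IsSelfAdjoint Ψ := (cfc_nonneg (fun x _ => zero_le)).isSelfAdjoint
  have hΓsa : IsSelfAdjoint Γ := (cfc_nonneg (fun x _ => zero_le)).isSelfAdjoint
  have hLsa : IsSelfAdjoint L := (cfc_nonneg (fun x _ => zero_le)).isSelfAdjoint
  have hsnd : ∀ m : Unitization ℂ A, m.fst = 0 → ((m.snd : A) : Unitization ℂ A) = m := by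
    intro m hm
    conv_rhs => rw [← Unitization.inl_fst_add_inr_snd_eq m]
    rw [hm]; simp
  set q : A := cfcₙ φ a with hq_def
  have hφ0 : φ 0 = 0 := by simp [hφ_def]
  have hqU : ((q : A) : Unitization ℂ A) = Φ :=
    Unitization.nnreal_cfcₙ_eq_cfc_inr a φ hφ0
  set d : A := cfcₙ dlt a with hd_def
  have hdlt0 : dlt 0 = 0 := by simp [hdlt_def]
  have hdU : ((d : A) : Unitization ℂ A) = cfc dlt aU :=
    Unitization.nnreal_cfcₙ_eq_cfc_inr a dlt hdlt0
  have hdpos : 0 ≤ d := cfcₙ_nonneg (fun x _ => zero_le)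
  set r : Fin n → A := fun j => (Ψ * ((b j : A) : Unitization ℂ A)).snd with hr_def
  have hrU : ∀ j, ((r j : A) : Unitization ℂ A) = Ψ * ((b j : A) : Unitization ℂ A) :=
    fun j => hsnd _ (by simp [Unitization.fst_mul])
  set ee : Fin n → A := fun j => (Γ * ((b j : A) : Unitization ℂ A)).snd with hee_def
  have heeU : ∀ j, ((ee j : A) : Unitization ℂ A) = Γ * ((b j : A) : Unitization ℂ A) :=
    fun j => hsnd _ (by simp [Unitization.fst_mul])
  set cc : Fin n → A := fun j => (L * ((b j : A) : Unitization ℂ A)).snd with hcc_def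
  have hccU : ∀ j, ((cc j : A) : Unitization ℂ A) = L * ((b j : A) : Unitization ℂ A) :=
    fun j => hsnd _ (by simp [Unitization.fst_mul])
  -- algebraic identities
  have hA1 : star q * q + d = a := by
    apply Unitization.inr_injective (R := ℂ)
    rw [Unitization.inr_add, Unitization.inr_mul, Unitization.inr_star, hqU, hdU,
      hΦsa.star_eq, hΦ_def,
      ← cfc_mul φ φ aU hφc.continuousOn hφc.continuousOn,
      ← cfc_add (a := aU) (fun u => φ u * φ u) dlt ((hφc.mul hφc).continuousOn) hdltc.continuousOn]
    calc cfc (fun u => φ u * φ u + dlt u) aU = cfc (id : ℝ≥0 → ℝ≥0) aU := by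
          apply cfc_congr
          intro u _
          show φ u * φ u + dlt u = u
          simp only [hφ_def, hdlt_def]
          have hs : NNReal.sqrt (u + 2*ε) * NNReal.sqrt (u + 2*ε) = u + 2*ε :=
            NNReal.mul_self_sqrt _
          have e1 : u * (NNReal.sqrt (u + 2*ε))⁻¹ * (u * (NNReal.sqrt (u + 2*ε))⁻¹)
              = u^2 * (u + 2*ε)⁻¹ := by
            rw [mul_mul_mul_comm, ← mul_inv, hs]; ring
          rw [e1, ← add_mul]
          have e2 : u^2 + 2*ε*u = u * (u + 2*ε) := by ring
          rw [e2, mul_assoc, mul_inv_cancel₀ (h2ε u), mul_one]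
      _ = aU := cfc_id ℝ≥0 aU
  have hφψγ : Φ * Ψ + Γ = 1 := by
    rw [hΦ_def, hΨ_def, hΓ_def,
      ← cfc_mul φ ψ aU hφc.continuousOn hψc.continuousOn,
      ← cfc_add (a := aU) (fun u => φ u * ψ u) γ ((hφc.mul hψc).continuousOn) hγc.continuousOn]
    calc cfc (fun u => φ u * ψ u + γ u) aU = cfc (fun _ : ℝ≥0 => (1:ℝ≥0)) aU := by
          apply cfc_congr
          intro u _
          show φ u * ψ u + γ u = 1
          simp only [hφ_def, hψ_def, hγ_def]
          have e1 : u * (NNReal.sqrt (u + 2*ε))⁻¹ * (NNReal.sqrt (u + 2*ε) * (u + ε)⁻¹)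
              = u * (u + ε)⁻¹ := by
            rw [mul_mul_mul_comm, mul_assoc, ← mul_assoc (NNReal.sqrt (u + 2*ε)),
              mul_inv_cancel₀ (hsqne u), one_mul]
          rw [e1, ← add_mul, mul_inv_cancel₀ (hεu u)]
      _ = 1 := cfc_const_one ℝ≥0 aU
  have hA2 : ∀ j, star q * r j + ee j = b j := by
    intro j
    apply Unitization.inr_injective (R := ℂ)
    rw [Unitization.inr_add, Unitization.inr_mul, Unitization.inr_star, hqU, hrU j, heeU j,
      hΦsa.star_eq, ← mul_assoc, ← add_mul, hφψγ, one_mul]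
  have hA2s : ∀ i, star (r i) * q + star (ee i) = star (b i) := by
    intro i
    have h := congrArg star (hA2 i)
    rw [star_add, star_mul, star_star] at h
    exact h
  have hkey4 : L * aU * L + Ψ * Ψ = L + L := by
    conv_lhs => rw [← cfc_id ℝ≥0 aU]
    rw [hL_def, hΨ_def,
      ← cfc_mul lam id aU hlamc.continuousOn continuous_id.continuousOn,
      ← cfc_mul (fun u => lam u * id u) lam aU ((hlamc.mul continuous_id).continuousOn) hlamc.continuousOn,
      ← cfc_mul ψ ψ aU hψc.continuousOn hψc.continuousOn,
      ← cfc_add (a := aU) (fun u => lam u * id u * lam u) (fun u => ψ u * ψ u)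
        (((hlamc.mul continuous_id).mul hlamc).continuousOn) ((hψc.mul hψc).continuousOn),
      ← cfc_add (a := aU) lam lam hlamc.continuousOn hlamc.continuousOn]
    apply cfc_congr
    intro u _
    show lam u * u * lam u + ψ u * ψ u = lam u + lam u
    simp only [hlam_def, hψ_def]
    have hs : NNReal.sqrt (u + 2*ε) * NNReal.sqrt (u + 2*ε) = u + 2*ε :=
      NNReal.mul_self_sqrt _
    have e1 : NNReal.sqrt (u + 2*ε) * (u + ε)⁻¹ * (NNReal.sqrt (u + 2*ε) * (u + ε)⁻¹)
        = (u + 2*ε) * ((u + ε)⁻¹ * (u + ε)⁻¹) := by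
      rw [mul_mul_mul_comm, hs]
    rw [e1]
    have e2 : (u + ε)⁻¹ * u * (u + ε)⁻¹ = u * ((u + ε)⁻¹ * (u + ε)⁻¹) := by ring
    rw [e2, ← add_mul]
    have e3 : u + (u + 2*ε) = (u + ε) + (u + ε) := by ring
    rw [e3, add_mul, mul_comm (u+ε) ((u + ε)⁻¹ * (u + ε)⁻¹), mul_assoc,
      inv_mul_cancel₀ (hεu u), mul_one]
  -- transformed module elements
  set x' : Fin n → X := fun i => xs i - x₀ <• (cc i) with hx'_def
  have hx'exp : ∀ i j, (inner A (x' i) (x' j) : A)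
      = inner A (xs i) (xs j) - star (cc i) * b j - star (b i) * cc j
        + star (cc i) * (a * cc j) := by
    intro i j
    simp only [hx'_def, RightCStarModule.inner_sub_left, RightCStarModule.inner_sub_right,
      inner_op_smul_left, inner_op_smul_right]
    rw [← star_inner x₀ (xs i)]
    show (inner A (xs i) (xs j) : A) - star (cc i) * b j
        - (star (b i) - star (cc i) * a) * cc j = _
    rw [sub_mul, mul_assoc]
    abel
  have habel : ∀ g T1 T2 T3 T4 : Unitization ℂ A, T3 + T4 = T1 + T2 →
      g - T1 - T2 + T3 + T4 = g := by
    intro g T1 T2 T3 T4 h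
    calc g - T1 - T2 + T3 + T4 = g + ((T3 + T4) - (T1 + T2)) := by abel
      _ = g := by rw [h]; simp
  have hA4 : ∀ i j, (inner A (x' i) (x' j) : A) + star (r i) * r j
      = inner A (xs i) (xs j) := by
    intro i j
    rw [hx'exp i j]
    apply Unitization.inr_injective (R := ℂ)
    simp only [Unitization.inr_add, Unitization.inr_sub, Unitization.inr_mul,
      Unitization.inr_star, hrU, hccU, haU_def.symm]
    simp only [star_mul, hΨsa.star_eq, hLsa.star_eq, mul_assoc]
    apply habel
    have hfact : ∀ Z W u v : Unitization ℂ A,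
        u * (Z + W) * v = u * Z * v + u * W * v := by
      intros Z W u v; rw [mul_add, add_mul]
    simp only [← mul_assoc]
    calc star ((b i : A) : Unitization ℂ A) * L * aU * L * ((b j : A) : Unitization ℂ A)
          + star ((b i : A) : Unitization ℂ A) * Ψ * Ψ * ((b j : A) : Unitization ℂ A)
        = star ((b i : A) : Unitization ℂ A) * (L * aU * L + Ψ * Ψ)
            * ((b j : A) : Unitization ℂ A) := by
          rw [hfact]; simp only [mul_assoc]
      _ = star ((b i : A) : Unitization ℂ A) * (L + L)
            * ((b j : A) : Unitization ℂ A) := by rw [hkey4]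
      _ = star ((b i : A) : Unitization ℂ A) * L * ((b j : A) : Unitization ℂ A)
          + star ((b i : A) : Unitization ℂ A) * L * ((b j : A) : Unitization ℂ A) := by
          rw [hfact]
  -- the vector w
  set w : F := ρ q f₀ + ∑ j, ρ (r j) (fs j) with hw_def
  have hS' : 0 ≤ ∑ i, ∑ j, (inner B (fs i) (ρ ((inner A (x' i) (x' j) : A)) (fs j)) : B) :=
    ih x' fs
  have hww : (inner B w w : B)
      = inner B f₀ (ρ (star q * q) f₀)
        + (∑ j, (inner B f₀ (ρ (star q * r j) (fs j)) : B))
        + ((∑ i, (inner B (fs i) (ρ (star (r i) * q) f₀) : B))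
        + ∑ i, ∑ j, (inner B (fs i) (ρ (star (r i) * r j) (fs j)) : B)) := by
    rw [hw_def]
    rw [RightCStarModule.inner_add_right, RightCStarModule.inner_add_left, RightCStarModule.inner_add_left]
    have t1 : (inner B (ρ q f₀) (ρ q f₀) : B) = inner B f₀ (ρ (star q * q) f₀) :=
      (itp_inner_rho_mul ρ hmul hstar _ _ _ _).symm
    have t2 : (inner B (∑ j, ρ (r j) (fs j)) (ρ q f₀) : B)
        = ∑ i, (inner B (fs i) (ρ (star (r i) * q) f₀) : B) := by
      rw [itp_inner_sum_left]
      exact Finset.sum_congr rfl fun i _ => (itp_inner_rho_mul ρ hmul hstar _ _ _ _).symm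
    have t3 : (inner B (ρ q f₀) (∑ j, ρ (r j) (fs j)) : B)
        = ∑ j, (inner B f₀ (ρ (star q * r j) (fs j)) : B) := by
      rw [itp_inner_sum_right]
      exact Finset.sum_congr rfl fun j _ => (itp_inner_rho_mul ρ hmul hstar _ _ _ _).symm
    have t4 : (inner B (∑ j, ρ (r j) (fs j)) (∑ j, ρ (r j) (fs j)) : B)
        = ∑ i, ∑ j, (inner B (fs i) (ρ (star (r i) * r j) (fs j)) : B) := by
      rw [itp_inner_sum_left]
      refine Finset.sum_congr rfl fun i _ => ?_
      rw [itp_inner_sum_right]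
      exact Finset.sum_congr rfl fun j _ => (itp_inner_rho_mul ρ hmul hstar _ _ _ _).symm
    rw [t1, t2, t3, t4]
    abel
  have hρadd : ∀ (z z' : A) (u v : F),
      (inner B u (ρ (z + z') v) : B) = inner B u (ρ z v) + inner B u (ρ z' v) := by
    intro z z' u v
    rw [hadd]
    simp [RightCStarModule.inner_add_right]
  refine ⟨(∑ i, ∑ j, (inner B (fs i) (ρ ((inner A (x' i) (x' j) : A)) (fs j)) : B))
      + inner B w w + inner B f₀ (ρ d f₀),
    (∑ j, (inner B f₀ (ρ (ee j) (fs j)) : B))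
      + ∑ i, (inner B (fs i) (ρ (star (ee i)) f₀) : B), ?_, ?_, ?_⟩
  · have h1 : (0:B) ≤ inner B w w := inner_self_nonneg
    have h2 : (0:B) ≤ inner B f₀ (ρ d f₀) :=
      itp_inner_rho_nonneg ρ hadd hsmul hmul hstar d hdpos f₀
    exact add_nonneg (add_nonneg hS' h1) h2
  · -- decomposition identity
    have c1 : (inner B f₀ (ρ a f₀) : B)
        = inner B f₀ (ρ (star q * q) f₀) + inner B f₀ (ρ d f₀) := by
      rw [← hρadd, hA1]
    have c2 : ∀ j, (inner B f₀ (ρ (b j) (fs j)) : B)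
        = inner B f₀ (ρ (star q * r j) (fs j)) + inner B f₀ (ρ (ee j) (fs j)) := by
      intro j; rw [← hρadd, hA2 j]
    have c3 : ∀ i, (inner B (fs i) (ρ (star (b i)) f₀) : B)
        = inner B (fs i) (ρ (star (r i) * q) f₀) + inner B (fs i) (ρ (star (ee i)) f₀) := by
      intro i; rw [← hρadd, hA2s i]
    have c4 : ∀ i j, (inner B (fs i) (ρ ((inner A (xs i) (xs j) : A)) (fs j)) : B)
        = inner B (fs i) (ρ ((inner A (x' i) (x' j) : A)) (fs j))
          + inner B (fs i) (ρ (star (r i) * r j) (fs j)) := by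
      intro i j; rw [← hρadd, hA4 i j]
    rw [c1, hww,
      Finset.sum_congr rfl (fun j _ => c2 j),
      Finset.sum_congr rfl (fun i _ => c3 i),
      Finset.sum_congr rfl (fun i _ => Finset.sum_congr rfl (fun j _ => c4 i j))]
    simp only [Finset.sum_add_distrib]
    abel
  · -- norm bound
    have hsart : IsSelfAdjoint (cfcₙ NNReal.sqrt a : A) :=
      (cfcₙ_nonneg (fun x _ => zero_le)).isSelfAdjoint
    have hsaU : ((cfcₙ NNReal.sqrt a : A) : Unitization ℂ A) = cfc NNReal.sqrt aU :=
      Unitization.nnreal_cfcₙ_eq_cfc_inr a NNReal.sqrt NNReal.sqrt_zero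
    set C₀ : ℝ := ‖(inner B f₀ (ρ (cfcₙ NNReal.sqrt a) f₀) : B)‖ with hC₀_def
    have hC₀0 : 0 ≤ C₀ := norm_nonneg _
    have hbound : ∀ j, ‖(inner B f₀ (ρ (ee j) (fs j)) : B)‖
        ≤ ‖fs j‖ * (Real.sqrt (Real.sqrt ε) * Real.sqrt (‖xs j‖^2 * C₀)) := by
      intro j
      -- the operator inequality
      have e5 : ee j * star (ee j)
          ≤ ((NNReal.sqrt ε * Kc j : ℝ≥0) : ℝ) • cfcₙ NNReal.sqrt a := by
        rw [← Unitization.inr_le_iff _ _ (IsSelfAdjoint.mul_star_self (ee j))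
          (IsSelfAdjoint.smul (star_trivial _) hsart)]
        rw [Unitization.inr_mul, Unitization.inr_star, heeU j,
          Unitization.inr_smul, hsaU, ← NNReal.smul_def]
        have hsm : (NNReal.sqrt ε * Kc j : ℝ≥0) • cfc NNReal.sqrt aU
            = cfc (fun u => (NNReal.sqrt ε * Kc j) * NNReal.sqrt u) aU := by
          have h := cfc_smul (R := ℝ≥0) (NNReal.sqrt ε * Kc j) NNReal.sqrt aU
            NNReal.continuous_sqrt.continuousOn
          rw [← h]
          apply cfc_congr; intro u _; simp [smul_eq_mul]
        rw [hsm, star_mul, hΓsa.star_eq]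
        have s1 : ((b j : A) : Unitization ℂ A) * star ((b j : A) : Unitization ℂ A)
            ≤ cfc (fun u : ℝ≥0 => (Kc j : ℝ≥0) * u) aU := by
          have h1 := hCS j
          rw [← Unitization.inr_le_iff _ _ (IsSelfAdjoint.mul_star_self (b j))
            (IsSelfAdjoint.smul (star_trivial _) (IsSelfAdjoint.of_nonneg ha))] at h1
          rw [Unitization.inr_mul, Unitization.inr_star, Unitization.inr_smul,
            ← NNReal.smul_def] at h1
          have h2 : (Kc j : ℝ≥0) • aU = cfc (fun u : ℝ≥0 => (Kc j : ℝ≥0) * u) aU := by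
            have h3 := cfc_smul (R := ℝ≥0) (Kc j) (id : ℝ≥0 → ℝ≥0) aU
              continuous_id.continuousOn
            rw [cfc_id ℝ≥0 aU] at h3
            rw [← h3]
            apply cfc_congr; intro u _; simp [smul_eq_mul]
          rwa [h2] at h1
        have s2 := star_left_conjugate_le_conjugate s1 Γ
        rw [hΓsa.star_eq] at s2
        have s3 : Γ * cfc (fun u : ℝ≥0 => (Kc j : ℝ≥0) * u) aU * Γ
            = cfc (fun u => γ u * ((Kc j : ℝ≥0) * u) * γ u) aU := by
          rw [hΓ_def,
            ← cfc_mul γ (fun u : ℝ≥0 => (Kc j : ℝ≥0) * u) aU hγc.continuousOn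
              (continuous_const.mul continuous_id).continuousOn,
            ← cfc_mul (fun u : ℝ≥0 => γ u * ((Kc j : ℝ≥0) * u)) γ aU
              ((hγc.mul (continuous_const.mul continuous_id)).continuousOn)
              hγc.continuousOn]
        have s4 : cfc (fun u => γ u * ((Kc j : ℝ≥0) * u) * γ u) aU
            ≤ cfc (fun u => (NNReal.sqrt ε * Kc j) * NNReal.sqrt u) aU := by
          refine cfc_mono (fun u _ => ?_)
            (hf := ((hγc.mul (continuous_const.mul continuous_id)).mul hγc).continuousOn)
            (hg := (continuous_const.mul NNReal.continuous_sqrt).continuousOn)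
          have base : γ u * u * γ u ≤ NNReal.sqrt ε * NNReal.sqrt u := by
            simpa [hγ_def] using itp_nnreal_pt ε hε u
          calc γ u * ((Kc j : ℝ≥0) * u) * γ u = (Kc j : ℝ≥0) * (γ u * u * γ u) := by ring
            _ ≤ (Kc j : ℝ≥0) * (NNReal.sqrt ε * NNReal.sqrt u) := mul_le_mul_right base _
            _ = (NNReal.sqrt ε * Kc j) * NNReal.sqrt u := by ring
        calc Γ * ((b j : A) : Unitization ℂ A)
              * (star ((b j : A) : Unitization ℂ A) * Γ)
            = Γ * (((b j : A) : Unitization ℂ A) * star ((b j : A) : Unitization ℂ A)) * Γ := by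
              simp [mul_assoc]
          _ ≤ Γ * cfc (fun u : ℝ≥0 => (Kc j : ℝ≥0) * u) aU * Γ := s2
          _ = cfc (fun u => γ u * ((Kc j : ℝ≥0) * u) * γ u) aU := s3
          _ ≤ cfc (fun u => (NNReal.sqrt ε * Kc j) * NNReal.sqrt u) aU := s4
      -- B-level estimates
      set g : F := ρ (star (ee j)) f₀ with hg_def
      have e1 : (inner B g (fs j) : B) = inner B f₀ (ρ (ee j) (fs j)) := by
        rw [hg_def, hstar, star_star]
      have e3 : (inner B g g : B) = inner B f₀ (ρ (ee j * star (ee j)) f₀) := by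
        have h := itp_inner_rho_mul ρ hmul hstar (star (ee j)) (star (ee j)) f₀ f₀
        rw [star_star] at h
        rw [hg_def]; exact h.symm
      have e6 : (0:B) ≤ inner B g g := inner_self_nonneg
      have e7 : (inner B g g : B) ≤ ((NNReal.sqrt ε * Kc j : ℝ≥0) : ℝ)
          • (inner B f₀ (ρ (cfcₙ NNReal.sqrt a) f₀) : B) := by
        rw [e3]
        have hmono := itp_inner_rho_mono ρ hadd hsmul hmul hstar e5 f₀
        have hsm2 : ∀ (t : ℝ) (z : A), (inner B f₀ (ρ (t • z) f₀) : B) = t • inner B f₀ (ρ z f₀) := by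
          intro t z
          rw [← Complex.coe_smul t z, hsmul]
          rw [LinearMap.smul_apply, RightCStarModule.inner_smul_right_complex, Complex.coe_smul]
        rwa [hsm2] at hmono
      have e8 : ‖(inner B g g : B)‖ ≤ ((NNReal.sqrt ε * Kc j : ℝ≥0) : ℝ) * C₀ := by
        refine le_trans (CStarAlgebra.norm_le_norm_of_nonneg_of_le e6 e7) ?_
        rw [norm_smul, Real.norm_of_nonneg (by positivity)]
      have e9 : ‖g‖ ≤ Real.sqrt (Real.sqrt ε) * Real.sqrt (‖xs j‖^2 * C₀) := by
        rw [RightCStarModule.norm_eq_sqrt_norm_inner_self (A := B) g]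
        refine le_trans (Real.sqrt_le_sqrt e8) ?_
        have hcoe : ((NNReal.sqrt ε * Kc j : ℝ≥0) : ℝ) * C₀
            = Real.sqrt ε * (‖xs j‖^2 * C₀) := by
          push_cast [Real.coe_sqrt, hKc j]
          ring
        rw [hcoe, Real.sqrt_mul (Real.sqrt_nonneg _)]
      calc ‖(inner B f₀ (ρ (ee j) (fs j)) : B)‖ = ‖(inner B g (fs j) : B)‖ := by rw [e1]
        _ ≤ ‖g‖ * ‖fs j‖ := norm_inner_le F
        _ ≤ (Real.sqrt (Real.sqrt ε) * Real.sqrt (‖xs j‖^2 * C₀)) * ‖fs j‖ :=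
            mul_le_mul_of_nonneg_right e9 (RightCStarModule.norm_nonneg (A := B))
        _ = ‖fs j‖ * (Real.sqrt (Real.sqrt ε) * Real.sqrt (‖xs j‖^2 * C₀)) := by ring
    have hstar_term : ∀ i, (inner B (fs i) (ρ (star (ee i)) f₀) : B)
        = star (inner B f₀ (ρ (ee i) (fs i)) : B) := by
      intro i
      rw [star_inner, hstar]
    calc ‖(∑ j, (inner B f₀ (ρ (ee j) (fs j)) : B))
          + ∑ i, (inner B (fs i) (ρ (star (ee i)) f₀) : B)‖
        ≤ ‖∑ j, (inner B f₀ (ρ (ee j) (fs j)) : B)‖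
          + ‖∑ i, (inner B (fs i) (ρ (star (ee i)) f₀) : B)‖ := norm_add_le _ _
      _ ≤ (∑ j, ‖(inner B f₀ (ρ (ee j) (fs j)) : B)‖)
          + ∑ i, ‖(inner B (fs i) (ρ (star (ee i)) f₀) : B)‖ :=
          add_le_add (norm_sum_le _ _) (norm_sum_le _ _)
      _ = ∑ j, 2 * ‖(inner B f₀ (ρ (ee j) (fs j)) : B)‖ := by
          rw [← Finset.sum_add_distrib]
          refine Finset.sum_congr rfl fun i _ => ?_
          rw [hstar_term i, norm_star]
          ring
      _ ≤ ∑ j, 2 * (‖fs j‖ * (Real.sqrt (Real.sqrt ε) * Real.sqrt (‖xs j‖^2 * C₀))) := by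
          refine Finset.sum_le_sum fun j _ => ?_
          have := hbound j
          nlinarith [hbound j, norm_nonneg (inner B f₀ (ρ (ee j) (fs j)) : B)]
      _ = Real.sqrt (Real.sqrt ε) * ∑ j, 2 * ‖fs j‖ * Real.sqrt (‖xs j‖^2 * C₀) := by
          rw [Finset.mul_sum]
          refine Finset.sum_congr rfl fun j _ => ?_
          ring


include hadd hsmul hmul hstar in
lemma itp_key_pos : ∀ (n : ℕ) (x : Fin n → X) (f : Fin n → F),
    0 ≤ ∑ i, ∑ j, (inner B (f i) (ρ ((inner A (x i) (x j) : A)) (f j)) : B) := by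
  intro n
  induction n with
  | zero => intro x f; simp
  | succ n ih =>
    intro x f
    classical
    have hsplit : (∑ i, ∑ j, (inner B (f i) (ρ ((inner A (x i) (x j) : A)) (f j)) : B))
        = (inner B (f 0) (ρ ((inner A (x 0) (x 0) : A)) (f 0)) : B)
          + (∑ j : Fin n, (inner B (f 0) (ρ ((inner A (x 0) (x j.succ) : A)) (f j.succ)) : B))
          + (∑ i : Fin n, (inner B (f i.succ) (ρ (star (inner A (x 0) (x i.succ) : A)) (f 0)) : B))
          + ∑ i : Fin n, ∑ j : Fin n,
              (inner B (f i.succ) (ρ ((inner A (x i.succ) (x j.succ) : A)) (f j.succ)) : B) := by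
      have hcol : ∀ i : Fin n, (inner A (x i.succ) (x 0) : A)
          = star (inner A (x 0) (x i.succ) : A) := fun i => (star_inner _ _).symm
      simp only [Fin.sum_univ_succ, Finset.sum_add_distrib, hcol]
      abel
    rw [hsplit]
    have hgen : ∀ SS : B, (∀ δ : ℝ, 0 < δ → ∃ P : B, 0 ≤ P ∧ ‖SS - P‖ < δ) → 0 ≤ SS := by
      intro SS hSS
      have hmem : SS ∈ closure {p : B | 0 ≤ p} := by
        rw [Metric.mem_closure_iff]
        intro δ hδ
        obtain ⟨P, hP, hdist⟩ := hSS δ hδ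
        exact ⟨P, hP, by rwa [dist_eq_norm]⟩
      rwa [CStarAlgebra.isClosed_nonneg.closure_eq] at hmem
    apply hgen
    intro δ hδ
    set M : ℝ := ∑ j : Fin n, 2 * ‖f j.succ‖ * Real.sqrt (‖x j.succ‖^2 *
      ‖(inner B (f 0) (ρ (cfcₙ NNReal.sqrt (inner A (x 0) (x 0) : A)) (f 0)) : B)‖) with hM_def
    have hM0 : 0 ≤ M := by
      refine Finset.sum_nonneg fun j _ => ?_
      have h1 : (0:ℝ) ≤ ‖f j.succ‖ := RightCStarModule.norm_nonneg (A := B)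
      exact mul_nonneg (mul_nonneg (by norm_num) h1) (Real.sqrt_nonneg _)
    set t : ℝ := min 1 (δ / (2 * (M + 1))) with ht_def
    have ht0 : 0 < t := lt_min one_pos (by positivity)
    have ht1 : t ≤ δ / (2*(M+1)) := min_le_right _ _
    set ε : ℝ≥0 := (Real.toNNReal t)^4 with hε_def
    have hε : 0 < ε := pow_pos (Real.toNNReal_pos.mpr ht0) 4
    obtain ⟨P, E, hP, hPE, hE⟩ := itp_eps_estimate ρ hadd hsmul hmul hstar
      (x 0) (fun i => x i.succ) (f 0) (fun i => f i.succ) ih ε hε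
    refine ⟨P, hP, ?_⟩
    rw [hPE]
    simp only [add_sub_cancel_left]
    refine lt_of_le_of_lt hE ?_
    have hcoe : ((ε:ℝ≥0):ℝ) = t^4 := by
      rw [hε_def]
      push_cast [Real.coe_toNNReal t ht0.le]
      ring
    have h1 : Real.sqrt (Real.sqrt ((ε:ℝ≥0):ℝ)) = t := by
      rw [hcoe, show t^4 = (t^2)^2 by ring, Real.sqrt_sq (by positivity),
        Real.sqrt_sq ht0.le]
    rw [h1]
    calc t * M ≤ (δ / (2*(M+1))) * M := mul_le_mul_of_nonneg_right ht1 hM0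
      _ < δ := by
        rw [div_mul_eq_mul_div, div_lt_iff₀ (by positivity)]
        nlinarith

end Eps

end ITPAux


/-- Interior tensor product of Hilbert C*-modules: if `X` is a Hilbert C*-module over `A`,
`F` a Hilbert C*-module over `B`, and `A` acts on `F` via a *-homomorphism `ρ` into the
adjointable operators, then the formula `⟨x₁ ⊗ f₁ | x₂ ⊗ f₂⟩ = ⟨f₁ | ρ(⟨x₁|x₂⟩) f₂⟩`
defines a positive-semidefinite `B`-valued inner product on the algebraic tensor product:
it is positive on finite sums of elementary tensors, right `B`-linear, and Hermitian. -/
theorem stmt_14 {A B X F : Type*}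
    [NonUnitalCStarAlgebra A] [PartialOrder A] [StarOrderedRing A]
    [NonUnitalCStarAlgebra B] [PartialOrder B] [StarOrderedRing B]
    [AddCommGroup X] [Module ℂ X] [SMul Aᵐᵒᵖ X] [Norm X] [RightCStarModule A X]
    [AddCommGroup F] [Module ℂ F] [SMul Bᵐᵒᵖ F] [Norm F] [RightCStarModule B F]
    (ρ : A → F →ₗ[ℂ] F)
    (hadd : ∀ a a' : A, ρ (a + a') = ρ a + ρ a')
    (hsmul : ∀ (c : ℂ) (a : A), ρ (c • a) = c • ρ a)
    (hmul : ∀ a a' : A, ρ (a * a') = (ρ a).comp (ρ a'))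
    (hstar : ∀ (a : A) (f₁ f₂ : F),
      (inner B (ρ a f₁) f₂) = inner B f₁ (ρ (star a) f₂))
    (hBlin : ∀ (a : A) (f : F) (b : B), ρ a (f <• b) = (ρ a f) <• b) :
    (∀ (n : ℕ) (x : Fin n → X) (f : Fin n → F),
      0 ≤ ∑ i, ∑ j, (inner B (f i) (ρ ((inner A (x i) (x j))) (f j)))) ∧
    (∀ (x₁ x₂ : X) (f₁ f₂ : F) (b : B),
      (inner B f₁ (ρ ((inner A x₁ x₂)) (f₂ <• b))) =
        (inner B f₁ (ρ ((inner A x₁ x₂)) f₂)) * b) ∧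
    (∀ (x₁ x₂ : X) (f₁ f₂ : F),
      star (inner B f₁ (ρ ((inner A x₁ x₂)) f₂)) =
        (inner B f₂ (ρ ((inner A x₂ x₁)) f₁))) := by
  refine ⟨itp_key_pos ρ hadd hsmul hmul hstar, ?_, ?_⟩
  · intro x₁ x₂ f₁ f₂ b
    rw [hBlin, RightCStarModule.inner_op_smul_right]
  · intro x₁ x₂ f₁ f₂
    rw [RightCStarModule.star_inner, hstar, RightCStarModule.star_inner]
end
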